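/- For every k ≥ 2 there exists M₀ such that for all m ≥ M₀, the equation f₁(x)^m + f₂(x)^m + ⋯ + f_k(x)^m = 0 has no solution in polynomials f₁, …, f_k ∈ ℂ[x] with all f_i nonzero and no f_i a scalar multiple of another f_j (i ≠ j). -/

import Mathlib

open Polynomial

lemma const_ratio (p q : ℂ[X]) (hq : q ≠ 0) (h : derivative p * q = p * derivative q) :
    ∃ α : ℂ, p = C α * q := by
  set d := GCDMonoid.gcd p q with hd
  have hd0 : d ≠ 0 := gcd_ne_zero_of_right hq
  set a := p / d with ha
  set b := q / d with hb
  have hpa : p = d * a := (EuclideanDomain.mul_div_cancel' hd0 (gcd_dvd_left p q)).symm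
  have hqb : q = d * b := (EuclideanDomain.mul_div_cancel' hd0 (gcd_dvd_right p q)).symm
  have hco : IsCoprime a b := isCoprime_div_gcd_div_gcd hq
  have hb0 : b ≠ 0 := right_div_gcd_ne_zero hq
  have key : derivative a * b = a * derivative b := by
    have h2 : d * d * (derivative a * b) = d * d * (a * derivative b) := by
      have := h
      rw [hpa, hqb, derivative_mul, derivative_mul] at this
      ring_nf at this ⊢
      linear_combination this
    exact mul_left_cancel₀ (mul_ne_zero hd0 hd0) h2
  have hab : a ∣ derivative a := by
    have : a ∣ derivative a * b := ⟨derivative b, by linear_combination key⟩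
    exact hco.dvd_of_dvd_mul_right this
  have ha' : derivative a = 0 := by
    by_contra hne
    have h1 : a.natDegree ≤ (derivative a).natDegree := natDegree_le_of_dvd hab hne
    have h2 : a.natDegree ≠ 0 := by
      intro h0
      rw [eq_C_of_natDegree_eq_zero h0] at hne
      simp at hne
    exact absurd (natDegree_derivative_lt h2) (not_lt.2 h1)
  have hb' : derivative b = 0 := by
    by_contra hne
    have hba : b ∣ derivative b := by
      have : b ∣ derivative b * a := ⟨derivative a, by linear_combination -key⟩
      exact hco.symm.dvd_of_dvd_mul_right this
    have h1 : b.natDegree ≤ (derivative b).natDegree := natDegree_le_of_dvd hba hne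
    have h2 : b.natDegree ≠ 0 := by
      intro h0
      rw [eq_C_of_natDegree_eq_zero h0] at hne
      simp at hne
    exact absurd (natDegree_derivative_lt h2) (not_lt.2 h1)
  obtain ⟨α, hα⟩ : ∃ α : ℂ, a = C α := ⟨_, eq_C_of_natDegree_eq_zero (natDegree_eq_zero_of_derivative_eq_zero ha')⟩
  obtain ⟨β, hβ⟩ : ∃ β : ℂ, b = C β := ⟨_, eq_C_of_natDegree_eq_zero (natDegree_eq_zero_of_derivative_eq_zero hb')⟩
  have hβ0 : β ≠ 0 := by rintro rfl; simp [hβ] at hb0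
  refine ⟨α / β, ?_⟩
  rw [hpa, hqb, hα, hβ]
  rw [mul_comm (C (α/β)), mul_assoc]
  congr 1
  rw [← C_mul]
  congr 1
  field_simp

lemma pow_eq_pow_ratio (p q : ℂ[X]) (hp : p ≠ 0) (hq : q ≠ 0) (m : ℕ) (hm : 1 ≤ m) (γ : ℂ)
    (h : p ^ m = C γ * q ^ m) : ∃ α : ℂ, p = C α * q := by
  obtain ⟨m, rfl⟩ := Nat.exists_eq_add_of_le hm
  have hD : derivative (p ^ (1+m)) = derivative (C γ * q ^ (1+m)) := by rw [h]
  rw [derivative_pow, derivative_mul, derivative_C, derivative_pow, zero_mul, zero_add] at hD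
  have hm0 : ((1+m : ℕ) : ℂ[X]) ≠ 0 := by
    have : ((1+m : ℕ) : ℂ[X]) = C ((1+m : ℕ) : ℂ) := by push_cast; simp
    rw [this, Ne, C_eq_zero]
    exact_mod_cast (by omega : 1+m ≠ 0)
  -- hD : ↑(1+m) * p ^ (1+m-1) * derivative p = C γ * (↑(1+m) * q ^ (1+m-1) * derivative q)
  have key : derivative p * q = p * derivative q := by
    have h1 : p ^ m * derivative p = C γ * (q ^ m * derivative q) := by
      apply mul_left_cancel₀ hm0
      simpa [Nat.add_sub_cancel, mul_assoc, mul_left_comm, mul_comm] using hD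
    -- multiply h1 by q, h by q' :  p^m p' q = C γ q^m q' q ; p^(1+m) q' = C γ q^(1+m) q'
    have h2 : p ^ m * (derivative p * q - p * derivative q) = 0 := by
      have e1 : p ^ m * derivative p * q = C γ * q ^ m * derivative q * q := by
        linear_combination q * h1
      have e2 : p ^ (1+m) * derivative q = C γ * q ^ (1+m) * derivative q := by
        linear_combination derivative q * h
      have e3 : p ^ (1+m) = p * p ^ m := by ring
      have e4 : q ^ (1+m) = q * q ^ m := by ring
      rw [e3, e4] at e2
      linear_combination e1 - e2
    have := mul_eq_zero.1 h2
    rcases this with h3 | h3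
    · exact absurd h3 (pow_ne_zero _ hp)
    · exact sub_eq_zero.1 h3
  exact const_ratio p q hq key

lemma units_smul_cases (s : ℤˣ) (p : ℂ[X]) : s • p = p ∨ s • p = -p := by
  rcases Int.units_eq_one_or s with rfl | rfl
  · left; simp
  · right; simp

lemma dvd_iterate_derivative (r : ℂ) (f : ℂ[X]) (e : ℕ) (hf : (X - C r) ^ e ∣ f) (i : ℕ) :
    (X - C r) ^ (e - i) ∣ derivative^[i] f := by
  induction i generalizing f e with
  | zero => simpa using hf
  | succ i ih =>
    rw [Function.iterate_succ_apply]
    have hstep : (X - C r) ^ (e - 1) ∣ derivative f := by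
      obtain ⟨s, rfl⟩ := hf
      rw [derivative_mul, derivative_pow]
      apply dvd_add
      · exact ((dvd_mul_left _ _).mul_right _).mul_right _
      · exact (pow_dvd_pow _ (by omega)).mul_right _
    exact (pow_dvd_pow _ (by omega)).trans (ih _ _ hstep)

noncomputable def Wmat {n : ℕ} (f : Fin n → ℂ[X]) : Matrix (Fin n) (Fin n) ℂ[X] :=
  Matrix.of fun i j => derivative^[(i : ℕ)] (f j)

lemma natDegree_iterate_derivative_le (f : ℂ[X]) (i : ℕ) :
    (derivative^[i] f).natDegree ≤ f.natDegree := by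
  induction i with
  | zero => simp
  | succ i ih =>
    rw [Function.iterate_succ_apply']
    exact (natDegree_derivative_le _).trans (by omega)

lemma natDegree_Wmat_det {n : ℕ} (f : Fin n → ℂ[X]) :
    (Wmat f).det.natDegree ≤ ∑ j, (f j).natDegree := by
  rw [Matrix.det_apply]
  apply natDegree_sum_le_of_forall_le
  intro σ _
  have hprod : (∏ j, Wmat f (σ j) j).natDegree ≤ ∑ j, (f j).natDegree := by
    refine (natDegree_prod_le _ _).trans ?_
    exact Finset.sum_le_sum fun j _ => natDegree_iterate_derivative_le _ _
  rcases units_smul_cases (Equiv.Perm.sign σ) (∏ j, Wmat f (σ j) j) with h | h <;> rw [h]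
  · exact hprod
  · simpa using hprod

lemma sum_tsub_le {n : ℕ} (a b : Fin n → ℕ) :
    (∑ j, a j) - (∑ j, b j) ≤ ∑ j, (a j - b j) := by
  have h1 : ∑ j, a j ≤ (∑ j, (a j - b j)) + ∑ j, b j := by
    rw [← Finset.sum_add_distrib]
    exact Finset.sum_le_sum fun j _ => by omega
  omega

lemma dvd_Wmat_det {n : ℕ} (f : Fin n → ℂ[X]) (r : ℂ) :
    (X - C r) ^ ((∑ j, rootMultiplicity r (f j)) - (∑ i : Fin n, (i : ℕ))) ∣ (Wmat f).det := by
  rw [Matrix.det_apply]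
  apply Finset.dvd_sum
  intro σ _
  have hterm : (X - C r) ^ ((∑ j, rootMultiplicity r (f j)) - (∑ i : Fin n, (i : ℕ))) ∣
      ∏ j, Wmat f (σ j) j := by
    have h2 : (X - C r) ^ (∑ j, (rootMultiplicity r (f j) - (σ j : ℕ))) ∣ ∏ j, Wmat f (σ j) j := by
      rw [← Finset.prod_pow_eq_pow_sum]
      exact Finset.prod_dvd_prod_of_dvd _ _ fun j _ =>
        dvd_iterate_derivative r (f j) _ (pow_rootMultiplicity_dvd _ _) _
    refine (pow_dvd_pow _ ?_).trans h2
    have hσ : (∑ j : Fin n, ((σ j : Fin n) : ℕ)) = ∑ i : Fin n, (i : ℕ) :=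
      Equiv.sum_comp σ (fun i => (i : ℕ))
    calc (∑ j, rootMultiplicity r (f j)) - (∑ i : Fin n, (i : ℕ))
        = (∑ j, rootMultiplicity r (f j)) - (∑ j : Fin n, ((σ j : Fin n) : ℕ)) := by rw [hσ]
      _ ≤ _ := sum_tsub_le _ _
  rcases units_smul_cases (Equiv.Perm.sign σ) (∏ j, Wmat f (σ j) j) with h | h <;> rw [h]
  · exact hterm
  · exact hterm.neg_right

lemma not_li_of_Wmat_det_eq_zero : ∀ n (f : Fin n → ℂ[X]),
    (Wmat f).det = 0 → ¬ LinearIndependent ℂ f := by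
  intro n
  induction n with
  | zero => intro f h; simp [Matrix.det_isEmpty] at h
  | succ n ih =>
    intro f hdet hli
    set f' : Fin n → ℂ[X] := f ∘ Fin.castSucc with hf'
    by_cases hW' : (Wmat f').det = 0
    · exact ih f' hW' (hli.comp Fin.castSucc (Fin.castSucc_injective n))
    set A := Wmat f with hA
    set c : Fin (n+1) → ℂ[X] := fun j => A.adjugate j (Fin.last n) with hc
    have hker : ∀ i, ∑ j, A i j * c j = 0 := by
      intro i
      have h1 : (A * A.adjugate) i (Fin.last n) = 0 := by
        rw [Matrix.mul_adjugate, hdet]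
        simp
      rw [Matrix.mul_apply] at h1
      exact h1
    have hsub : (A.updateRow (Fin.last n) (Pi.single (Fin.last n) 1)).submatrix
        (Fin.last n).succAbove (Fin.last n).succAbove = Wmat f' := by
      ext i j
      rw [Fin.succAbove_last]
      simp only [Matrix.submatrix_apply, Matrix.updateRow_ne (Fin.castSucc_lt_last i).ne]
      rfl
    have hclast : c (Fin.last n) = (Wmat f').det := by
      rw [hc]
      simp only [Matrix.adjugate_apply]
      rw [Matrix.det_succ_row _ (Fin.last n)]
      rw [Finset.sum_eq_single (Fin.last n)]
      · rw [hsub]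
        simp [Matrix.updateRow_self, Even.neg_one_pow (Even.add_self (n:ℕ))]
      · intro j _ hj
        simp [Matrix.updateRow_self, Pi.single_eq_of_ne hj]
      · simp
    have hc0 : c (Fin.last n) ≠ 0 := by rw [hclast]; exact hW'
    have hE : ∀ i : ℕ, i ≤ n → ∑ j, derivative^[i] (f j) * c j = 0 := by
      intro i hi
      exact hker ⟨i, Nat.lt_succ_of_le hi⟩
    have hE' : ∀ i : ℕ, i < n → ∑ j, derivative^[i] (f j) * derivative (c j) = 0 := by
      intro i hi
      have h1 : derivative (∑ j, derivative^[i] (f j) * c j) = 0 := by rw [hE i (le_of_lt hi)]; simp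
      rw [derivative_sum] at h1
      have h2 : ∀ j : Fin (n+1), derivative (derivative^[i] (f j) * c j) =
          derivative^[i+1] (f j) * c j + derivative^[i] (f j) * derivative (c j) := by
        intro j
        rw [derivative_mul, Function.iterate_succ_apply']
      simp only [h2] at h1
      rw [Finset.sum_add_distrib, hE (i+1) hi] at h1
      simpa using h1
    set d : Fin (n+1) → ℂ[X] :=
      fun j => derivative (c (Fin.last n)) * c j - c (Fin.last n) * derivative (c j) with hd
    have hdlast : d (Fin.last n) = 0 := by simp [hd]; ring
    have hdrow : ∀ i : Fin n, ∑ j, Wmat f' i j * d (Fin.castSucc j) = 0 := by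
      intro i
      have h1 : ∑ j : Fin (n+1), derivative^[(i:ℕ)] (f j) * d j = 0 := by
        have e1 := hE (i:ℕ) (le_of_lt i.isLt)
        have e2 := hE' (i:ℕ) i.isLt
        calc ∑ j : Fin (n+1), derivative^[(i:ℕ)] (f j) * d j
            = derivative (c (Fin.last n)) * ∑ j, derivative^[(i:ℕ)] (f j) * c j
              - c (Fin.last n) * ∑ j, derivative^[(i:ℕ)] (f j) * derivative (c j) := by
              rw [Finset.mul_sum, Finset.mul_sum, ← Finset.sum_sub_distrib]
              exact Finset.sum_congr rfl fun j _ => by simp [hd]; ring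
          _ = 0 := by rw [e1, e2]; simp
      rw [Fin.sum_univ_castSucc] at h1
      rw [hdlast, mul_zero, add_zero] at h1
      exact h1
    have hdzero : ∀ j : Fin (n+1), d j = 0 := by
      have hmv : (Wmat f').mulVec (fun j => d (Fin.castSucc j)) = 0 := by
        funext i
        simpa [Matrix.mulVec, dotProduct] using hdrow i
      have h2 : ∀ j : Fin n, (Wmat f').det * d (Fin.castSucc j) = 0 := by
        intro j
        have h3 : ((Wmat f').adjugate).mulVec ((Wmat f').mulVec (fun j => d (Fin.castSucc j)))
            = (Wmat f').det • (fun j => d (Fin.castSucc j)) := by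
          rw [Matrix.mulVec_mulVec, Matrix.adjugate_mul, Matrix.smul_mulVec,
            Matrix.one_mulVec]
        rw [hmv] at h3
        simp only [Matrix.mulVec_zero] at h3
        have := congrFun h3.symm j
        simpa using this
      intro j
      refine Fin.lastCases ?_ ?_ j
      · exact hdlast
      · intro j'
        rcases mul_eq_zero.1 (h2 j') with h | h
        · exact absurd h hW'
        · exact h
    have hratio : ∀ j, ∃ α : ℂ, c j = C α * c (Fin.last n) := by
      intro j
      apply const_ratio _ _ hc0
      have := hdzero j
      rw [hd] at this
      simp only [sub_eq_zero] at this
      linear_combination -this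
    choose α hα using hratio
    have hαlast : α (Fin.last n) = 1 := by
      have h1 := hα (Fin.last n)
      have h2 : (C (α (Fin.last n)) - 1) * c (Fin.last n) = 0 := by linear_combination -h1
      rcases mul_eq_zero.1 h2 with h | h
      · have : C (α (Fin.last n)) = C 1 := by rw [sub_eq_zero] at h; simpa using h
        exact C_injective this
      · exact absurd h hc0
    have hrel : ∑ j, α j • f j = 0 := by
      have h1 := hE 0 (Nat.zero_le n)
      simp only [Function.iterate_zero_apply] at h1
      have h2 : (∑ j, C (α j) * f j) * c (Fin.last n) = 0 := by
        rw [Finset.sum_mul]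
        rw [← h1]
        exact Finset.sum_congr rfl fun j _ => by rw [hα j]; ring
      rcases mul_eq_zero.1 h2 with h | h
      · rw [← h]
        exact Finset.sum_congr rfl fun j _ => by rw [smul_eq_C_mul]
      · exact absurd h hc0
    have := (Fintype.linearIndependent_iff.1 hli) α hrel (Fin.last n)
    rw [hαlast] at this
    exact one_ne_zero this

lemma Wmat_det_ne_zero {n : ℕ} {f : Fin n → ℂ[X]} (hf : LinearIndependent ℂ f) :
    (Wmat f).det ≠ 0 := fun h => not_li_of_Wmat_det_eq_zero n f h hf

lemma det_updateRow_finset_sum {n : ℕ} (M : Matrix (Fin n) (Fin n) ℂ[X]) (j : Fin n)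
    {α : Type*} [DecidableEq α] (S : Finset α) (w : α → (Fin n → ℂ[X])) :
    (M.updateRow j (∑ t ∈ S, w t)).det = ∑ t ∈ S, (M.updateRow j (w t)).det := by
  induction S using Finset.induction_on with
  | empty =>
    simp only [Finset.sum_empty]
    have : (0 : Fin n → ℂ[X]) = (0 : ℂ[X]) • (0 : Fin n → ℂ[X]) := by simp
    rw [this, Matrix.det_updateRow_smul]
    simp
  | insert a S hk ih =>
    rw [Finset.sum_insert hk, Matrix.det_updateRow_add, ih, Finset.sum_insert hk]

lemma iterate_derivative_sum' {n : ℕ} (v : Fin n → ℂ[X]) (j : ℕ) :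
    derivative^[j] (∑ t, v t) = ∑ t, derivative^[j] (v t) := by
  induction j with
  | zero => simp
  | succ j ih =>
    rw [Function.iterate_succ_apply', ih, derivative_sum]
    exact Finset.sum_congr rfl fun t _ => (Function.iterate_succ_apply' _ _ _).symm

/-- omitting different indices from a zero-sum family gives equal-up-to-sign Wronskians -/
lemma Wdet_omit_sign {n : ℕ} (v : Fin (n+1) → ℂ[X]) (hsum : ∑ t, v t = 0)
    (t₀ t₁ : Fin (n+1)) :
    (Wmat (v ∘ t₀.succAbove)).det = (Wmat (v ∘ t₁.succAbove)).det ∨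
    (Wmat (v ∘ t₀.succAbove)).det = -(Wmat (v ∘ t₁.succAbove)).det := by
  rcases eq_or_ne t₀ t₁ with rfl | hne
  · exact Or.inl rfl
  set u : Fin (n+1) → (Fin n → ℂ[X]) := fun t j => derivative^[(j : ℕ)] (v t) with hu
  have husum : ∑ t, u t = 0 := by
    funext j
    have h := iterate_derivative_sum' v (j : ℕ)
    rw [hsum, Polynomial.iterate_derivative_zero] at h
    calc (∑ t, u t) j = ∑ t, derivative^[(j:ℕ)] (v t) := by simp [hu]
      _ = 0 := h.symm
  obtain ⟨s₁, hs₁⟩ := Fin.exists_succAbove_eq hne.symm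
  -- row matrix for t₀
  set M : Matrix (Fin n) (Fin n) ℂ[X] := Matrix.of (fun s j => u (t₀.succAbove s) j) with hM
  set M₁ : Matrix (Fin n) (Fin n) ℂ[X] := Matrix.of (fun s j => u (t₁.succAbove s) j) with hM₁
  have hMdet : (Wmat (v ∘ t₀.succAbove)).det = M.det := by
    rw [← Matrix.det_transpose M]
    congr 1
  have hM₁det : (Wmat (v ∘ t₁.succAbove)).det = M₁.det := by
    rw [← Matrix.det_transpose M₁]
    congr 1
  -- row s₁ of M is u t₁; replace it using the sum identity
  have hrow : M s₁ = u t₁ := by funext j; rw [hM, ← hs₁]; rfl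
  have hts : u t₁ = ∑ t ∈ Finset.univ.erase t₁, -(u t) := by
    have h1 : u t₁ + ∑ t ∈ Finset.univ.erase t₁, u t = 0 := by
      rw [Finset.add_sum_erase _ _ (Finset.mem_univ t₁)]
      exact husum
    have h2 : ∑ t ∈ Finset.univ.erase t₁, -(u t) = -∑ t ∈ Finset.univ.erase t₁, u t := by
      simp
    rw [h2, neg_eq_iff_add_eq_zero.2]
    rw [add_comm] at h1
    exact h1
  have hdet1 : M.det = ∑ t ∈ Finset.univ.erase t₁, (M.updateRow s₁ (-(u t))).det := by
    conv_lhs => rw [← Matrix.updateRow_eq_self M s₁, hrow, hts]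
    exact det_updateRow_finset_sum _ _ _ _
  have hzero : ∀ t ∈ Finset.univ.erase t₁, t ≠ t₀ → (M.updateRow s₁ (-(u t))).det = 0 := by
    intro t ht htne
    obtain ⟨st, hst⟩ := Fin.exists_succAbove_eq htne
    have hstne : st ≠ s₁ := by
      intro h
      rw [h, hs₁] at hst
      exact (Finset.mem_erase.1 ht).1 hst.symm
    have hzero1 : (M.updateRow s₁ (u t)).det = 0 := by
      apply Matrix.det_zero_of_row_eq hstne
      funext j
      rw [Matrix.updateRow_ne hstne, Matrix.updateRow_self]
      rw [hM, ← hst]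
      rfl
    have : -(u t) = (-1 : ℂ[X]) • (u t) := by funext j; simp
    rw [this, Matrix.det_updateRow_smul, hzero1, mul_zero]
  have hdet2 : M.det = (M.updateRow s₁ (-(u t₀))).det := by
    rw [hdet1]
    refine Finset.sum_eq_single t₀ hzero (fun h => absurd (Finset.mem_erase.2 ⟨hne, Finset.mem_univ _⟩) h)
  set N := M.updateRow s₁ (u t₀) with hN
  have hdet3 : M.det = -N.det := by
    rw [hdet2]
    have : -(u t₀) = (-1 : ℂ[X]) • (u t₀) := by funext j; simp
    rw [this, Matrix.det_updateRow_smul]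
    ring
  set p : Fin n → Fin (n+1) := fun s => if s = s₁ then t₀ else t₀.succAbove s with hp
  have hNrow : ∀ s, N s = u (p s) := by
    intro s
    by_cases h : s = s₁
    · subst h; rw [hN, Matrix.updateRow_self, hp]; simp
    · rw [hN, Matrix.updateRow_ne h, hp]
      simp only [if_neg h]
      rfl
  have hpne : ∀ s, p s ≠ t₁ := by
    intro s
    by_cases h : s = s₁
    · subst h; simpa [hp] using hne
    · rw [hp]; simp only [if_neg h]
      rw [← hs₁]
      exact fun hc => h (Fin.succAbove_right_injective hc)
  have hpinj : Function.Injective p := by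
    intro s s' h
    rw [hp] at h
    by_cases h1 : s = s₁ <;> by_cases h2 : s' = s₁
    · rw [h1, h2]
    · simp only [if_pos h1, if_neg h2] at h
      exact absurd h.symm (Fin.succAbove_ne t₀ s')
    · simp only [if_neg h1, if_pos h2] at h
      exact absurd h (Fin.succAbove_ne t₀ s)
    · simp only [if_neg h1, if_neg h2] at h
      exact Fin.succAbove_right_injective h
  have hqex : ∀ s, ∃ z, t₁.succAbove z = p s := fun s => Fin.exists_succAbove_eq (hpne s)
  choose q hq using hqex
  have hqinj : Function.Injective q := by
    intro s s' h
    apply hpinj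
    rw [← hq s, ← hq s', h]
  set σ : Equiv.Perm (Fin n) := Equiv.ofBijective q (Finite.injective_iff_bijective.1 hqinj) with hσ
  have hNsub : N = M₁.submatrix σ id := Matrix.ext fun s j => by
    rw [Matrix.submatrix_apply, id]
    calc N s j = u (p s) j := by rw [hNrow s]
      _ = u (t₁.succAbove (q s)) j := by rw [hq s]
      _ = M₁ (σ s) j := rfl
  have hdet4 : N.det = (Equiv.Perm.sign σ : ℂ[X]) * M₁.det := by
    rw [hNsub]
    have := Matrix.det_permute σ M₁
    simpa using this
  rw [hMdet, hM₁det, hdet3, hdet4]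
  rcases Int.units_eq_one_or (Equiv.Perm.sign σ) with h | h <;> rw [h]
  · right; simp
  · left; simp

/-- For every `k ≥ 2` there exists `M₀` such that for all `m ≥ M₀` the
equation `f₁^m + ⋯ + f_k^m = 0` has no solution in nonzero polynomials over ℂ
with no `f i` a scalar multiple of another. -/
theorem no_nontrivial_power_sums (k : ℕ) (hk : 2 ≤ k) :
    ∃ M₀ : ℕ, ∀ m : ℕ, M₀ ≤ m →
      ¬ ∃ f : Fin k → ℂ[X], (∀ i, f i ≠ 0) ∧
        (∀ i j, i ≠ j → ∀ c : ℂ, f i ≠ c • f j) ∧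
        ∑ i, f i ^ m = 0 := by
  classical
  refine ⟨k ^ 3 + 1, ?_⟩
  rintro m hm ⟨f, hf0, hfprop, hfsum⟩
  have hm1 : 1 ≤ m := le_trans (Nat.le_add_left 1 (k^3)) hm
  -- minimal support of a nontrivial relation among the f i ^ m
  set P : ℕ → Prop := fun n => ∃ c : Fin k → ℂ, c ≠ 0 ∧ (∑ i, c i • f i ^ m = 0) ∧
    (Finset.univ.filter (fun i => c i ≠ 0)).card = n with hP
  have hex : ∃ n, P n := by
    refine ⟨(Finset.univ.filter (fun i : Fin k => (1:ℂ) ≠ 0)).card, (fun _ => 1), ?_, ?_, rfl⟩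
    · intro h
      have := congrFun h ⟨0, by omega⟩
      simp at this
    · simpa using hfsum
  obtain ⟨c, hcne, hcrel, hccard⟩ := Nat.find_spec hex
  have hmin : ∀ c' : Fin k → ℂ, c' ≠ 0 → (∑ i, c' i • f i ^ m = 0) →
      Nat.find hex ≤ (Finset.univ.filter (fun i => c' i ≠ 0)).card :=
    fun c' h1 h2 => Nat.find_min' hex ⟨c', h1, h2, rfl⟩
  set S : Finset (Fin k) := Finset.univ.filter (fun i => c i ≠ 0) with hS
  have hmemS : ∀ i, i ∈ S ↔ c i ≠ 0 := by intro i; simp [hS]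
  have hSne : S.Nonempty := by
    obtain ⟨i, hi⟩ := Function.ne_iff.1 hcne
    exact ⟨i, (hmemS i).2 (by simpa using hi)⟩
  -- divide by the gcd
  set G : ℂ[X] := S.gcd f with hG
  have hG0 : G ≠ 0 := by
    intro h
    obtain ⟨i, hi⟩ := hSne
    exact hf0 i (Finset.gcd_eq_zero_iff.1 (hG ▸ h) i hi)
  set u : Fin k → ℂ[X] := fun i => f i / G with hu
  have hfu : ∀ i ∈ S, f i = G * u i := fun i hi =>
    (EuclideanDomain.mul_div_cancel' hG0 (Finset.gcd_dvd hi)).symm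
  have hu0 : ∀ i ∈ S, u i ≠ 0 := by
    intro i hi h
    exact hf0 i (by rw [hfu i hi, h, mul_zero])
  have hnr : ∀ r : ℂ, ∃ i ∈ S, ¬ ((X - C r) ∣ u i) := by
    intro r
    by_contra h
    push_neg at h
    have hdvd : G * (X - C r) ∣ G := by
      apply Finset.dvd_gcd
      intro i hi
      rw [hfu i hi]
      exact mul_dvd_mul_left G (h i hi)
    obtain ⟨t, ht⟩ := hdvd
    have h1 : G * 1 = G * ((X - C r) * t) := by rw [mul_one]; nth_rewrite 1 [ht]; ring
    have h2 : (1 : ℂ[X]) = (X - C r) * t := mul_left_cancel₀ hG0 h1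
    exact Polynomial.not_isUnit_X_sub_C r (IsUnit.of_mul_eq_one t h2.symm)
  have hrelS : ∑ i ∈ S, c i • f i ^ m = 0 := by
    rw [← hcrel]
    apply Finset.sum_subset (Finset.subset_univ S)
    intro i _ hi
    rw [(not_not.1 (fun h => hi ((hmemS i).2 h)) : c i = 0), zero_smul]
  have hurel : ∑ i ∈ S, c i • u i ^ m = 0 := by
    have h1 : (∑ i ∈ S, c i • u i ^ m) * G ^ m = 0 := by
      rw [Finset.sum_mul, ← hrelS]
      apply Finset.sum_congr rfl
      intro i hi
      rw [hfu i hi]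
      rw [smul_mul_assoc, mul_pow]
      ring_nf
    rcases mul_eq_zero.1 h1 with h | h
    · exact h
    · exact absurd h (pow_ne_zero m hG0)
  -- minimality in terms of u
  have hminu : ∀ c' : Fin k → ℂ, c' ≠ 0 → (∀ i, c' i ≠ 0 → i ∈ S) →
      (∑ i ∈ S, c' i • u i ^ m = 0) → (Finset.univ.filter (fun i => c' i ≠ 0)) = S := by
    intro c' h1 h2 h3
    have hrel' : ∑ i, c' i • f i ^ m = 0 := by
      have h4 : ∑ i ∈ S, c' i • f i ^ m = 0 := by
        have h5 : (∑ i ∈ S, c' i • u i ^ m) * G ^ m = 0 := by rw [h3, zero_mul]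
        rw [Finset.sum_mul] at h5
        rw [← h5]
        apply Finset.sum_congr rfl
        intro i hi
        rw [hfu i hi, smul_mul_assoc, mul_pow]
        ring_nf
      rw [← h4]
      refine (Finset.sum_subset (Finset.subset_univ S) ?_).symm
      intro i _ hi
      rw [not_not.1 (fun h => hi (h2 i h)), zero_smul]
    have hle := hmin c' h1 hrel'
    have hsub : (Finset.univ.filter (fun i => c' i ≠ 0)) ⊆ S := by
      intro i hi
      exact h2 i (by simpa using hi)
    apply Finset.eq_of_subset_of_card_le hsub
    exact le_trans (le_of_eq hccard) hle
  -- helper: proportionality contradiction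
  have hpropu : ∀ i ∈ S, ∀ j ∈ S, i ≠ j → ∀ α : ℂ, u i ≠ C α * u j := by
    intro i hi j hj hij α h
    apply hfprop i j hij α
    rw [hfu i hi, hfu j hj, h, smul_eq_C_mul]
    ring
  obtain ⟨n, hn⟩ : ∃ n, S.card = n + 1 := ⟨S.card - 1, by have := Finset.card_pos.2 hSne; omega⟩
  by_cases hn0 : n = 0
  · -- singleton support: impossible
    subst hn0
    obtain ⟨i, hSi⟩ := Finset.card_eq_one.1 hn
    rw [hSi, Finset.sum_singleton] at hurel
    have hiS : i ∈ S := by rw [hSi]; exact Finset.mem_singleton_self i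
    rcases smul_eq_zero.1 hurel with h | h
    · exact (hmemS i).1 hiS h
    · exact hu0 i hiS (pow_eq_zero_iff (by omega) |>.1 h)
  -- main case : S.card = n + 1 ≥ 2
  set e := S.orderIsoOfFin hn with he
  have heS : ∀ t, (↑(e t) : Fin k) ∈ S := fun t => (e t).2
  have heinj : ∀ t t', (↑(e t) : Fin k) = ↑(e t') → t = t' :=
    fun t t' h => e.injective (Subtype.coe_injective h)
  have hce : ∀ t, c ↑(e t) ≠ 0 := fun t => (hmemS _).1 (heS t)
  have hue : ∀ t, u ↑(e t) ≠ 0 := fun t => hu0 _ (heS t)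
  set v : Fin (n+1) → ℂ[X] := fun t => C (c ↑(e t)) * (u ↑(e t)) ^ m with hv
  have hv0 : ∀ t, v t ≠ 0 := fun t =>
    mul_ne_zero (C_ne_zero.2 (hce t)) (pow_ne_zero _ (hue t))
  have hvsum : ∑ t, v t = 0 := by
    have h1 : ∑ i ∈ S, C (c i) * u i ^ m = 0 := by
      rw [← hurel]
      exact Finset.sum_congr rfl fun i _ => by rw [smul_eq_C_mul]
    calc ∑ t, v t = ∑ x : {x // x ∈ S}, (C (c ↑x) * u ↑x ^ m) := by
          exact Equiv.sum_comp e.toEquiv (fun x => C (c ↑x) * u ↑x ^ m)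
      _ = ∑ x ∈ S.attach, (C (c ↑x) * u ↑x ^ m) := by rw [← Finset.univ_eq_attach]
      _ = ∑ i ∈ S, C (c i) * u i ^ m := Finset.sum_attach S (fun i => C (c i) * u i ^ m)
      _ = 0 := h1
  have hLI : ∀ t₀ : Fin (n+1), LinearIndependent ℂ (v ∘ t₀.succAbove) := by
    intro t₀
    rw [Fintype.linearIndependent_iff]
    intro a ha
    by_contra hcon
    push_neg at hcon
    obtain ⟨s₀, hs₀⟩ := hcon
    set c' : Fin k → ℂ :=
      fun i => ∑ s : Fin n, if (↑(e (t₀.succAbove s)) : Fin k) = i then a s * c i else 0 with hc'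
    have hc'app : ∀ s : Fin n, c' ↑(e (t₀.succAbove s)) = a s * c ↑(e (t₀.succAbove s)) := by
      intro s
      simp only [hc']
      rw [Finset.sum_eq_single s]
      · simp
      · intro s' _ hs'
        apply if_neg
        intro h
        exact hs' (Fin.succAbove_right_injective (heinj _ _ h))
      · intro h; exact absurd (Finset.mem_univ s) h
    have hc'supp : ∀ i, c' i ≠ 0 → ∃ s, (↑(e (t₀.succAbove s)) : Fin k) = i := by
      intro i hi
      by_contra h
      push_neg at h
      apply hi
      simp only [hc']
      exact Finset.sum_eq_zero fun s _ => if_neg (h s)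
    have hc'ne : c' ≠ 0 := by
      intro h
      have h2 := congrFun h ↑(e (t₀.succAbove s₀))
      rw [hc'app s₀] at h2
      simp only [Pi.zero_apply, mul_eq_zero] at h2
      rcases h2 with h2 | h2
      · exact hs₀ h2
      · exact hce _ h2
    have hc'S : ∀ i, c' i ≠ 0 → i ∈ S := fun i hi => by
      obtain ⟨s, hs⟩ := hc'supp i hi
      exact hs ▸ heS _
    have hc'rel : ∑ i ∈ S, c' i • u i ^ m = 0 := by
      have swap : ∑ i ∈ S, c' i • u i ^ m
          = ∑ s : Fin n, ∑ i ∈ S, (if (↑(e (t₀.succAbove s)) : Fin k) = i then a s * c i else 0) • u i ^ m := by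
        rw [Finset.sum_comm]
        apply Finset.sum_congr rfl
        intro i _
        simp only [hc']
        rw [Finset.sum_smul]
      rw [swap]
      have inner : ∀ s : Fin n,
          (∑ i ∈ S, (if (↑(e (t₀.succAbove s)) : Fin k) = i then a s * c i else 0) • u i ^ m)
          = a s • v (t₀.succAbove s) := by
        intro s
        rw [Finset.sum_eq_single (↑(e (t₀.succAbove s)) : Fin k)]
        · rw [if_pos rfl, hv, smul_eq_C_mul, smul_eq_C_mul, C_mul]
          ring
        · intro i _ hne
          rw [if_neg (fun h => hne h.symm), zero_smul]
        · intro h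
          exact absurd (heS _) h
      rw [Finset.sum_congr rfl (fun s _ => inner s)]
      simpa [Function.comp] using ha
    have hSeq := hminu c' hc'ne hc'S hc'rel
    have h3 : c' ↑(e t₀) = 0 := by
      by_contra h4
      obtain ⟨s, hs⟩ := hc'supp _ h4
      exact (Fin.succAbove_ne t₀ s) (heinj _ _ hs)
    have h5 : (↑(e t₀) : Fin k) ∈ Finset.univ.filter (fun i => c' i ≠ 0) := by
      rw [hSeq]; exact heS t₀
    rw [Finset.mem_filter] at h5
    exact h5.2 h3
  -- no common root among the v's
  have hcr : ∀ r : ℂ, ∃ t : Fin (n+1), rootMultiplicity r (v t) = 0 := by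
    intro r
    obtain ⟨i, hiS, hir⟩ := hnr r
    refine ⟨e.symm ⟨i, hiS⟩, ?_⟩
    have hei : (↑(e (e.symm ⟨i, hiS⟩)) : Fin k) = i := by rw [OrderIso.apply_symm_apply]
    apply rootMultiplicity_eq_zero
    intro hroot
    apply hir
    rw [dvd_iff_isRoot]
    have h2 : eval r (v (e.symm ⟨i, hiS⟩)) = c i * (eval r (u i)) ^ m := by
      rw [hv]; simp [hei]
    rw [IsRoot, h2] at hroot
    rcases mul_eq_zero.1 hroot with h | h
    · exact absurd h (hei ▸ hce (e.symm ⟨i, hiS⟩))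
    · exact pow_eq_zero_iff (by omega) |>.1 h
  -- degrees
  set d : Fin (n+1) → ℕ := fun t => (u ↑(e t)).natDegree with hd
  have hvdeg : ∀ t, (v t).natDegree = m * d t := by
    intro t
    rw [hv]
    rw [natDegree_C_mul (hce t), natDegree_pow]
  obtain ⟨t₀, -, ht₀⟩ := Finset.exists_max_image Finset.univ d ⟨0, Finset.mem_univ 0⟩
  set W := (Wmat (v ∘ t₀.succAbove)).det with hW
  have hW0 : W ≠ 0 := Wmat_det_ne_zero (hLI t₀)
  set T : ℕ := ∑ i : Fin n, (i : ℕ) with hT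
  have hprod0 : (∏ t, v t) ≠ 0 := Finset.prod_ne_zero_iff.2 fun t _ => hv0 t
  set R : Finset ℂ := (∏ t, v t).roots.toFinset with hR
  -- root multiplicity lower bound on W
  have hkey : ∀ r ∈ R, (∑ t, rootMultiplicity r (v t)) ≤ rootMultiplicity r W + T := by
    intro r _
    obtain ⟨t₁, ht₁⟩ := hcr r
    have hsplit : ∑ t, rootMultiplicity r (v t)
        = ∑ s : Fin n, rootMultiplicity r (v (t₁.succAbove s)) := by
      rw [Fin.sum_univ_succAbove (fun t => rootMultiplicity r (v t)) t₁, ht₁, zero_add]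
    have hdvd := dvd_Wmat_det (v ∘ t₁.succAbove) r
    have hdvdW : (X - C r) ^ ((∑ s : Fin n, rootMultiplicity r (v (t₁.succAbove s))) - T) ∣ W := by
      rcases Wdet_omit_sign v hvsum t₀ t₁ with h | h
      · rw [hW, h]; exact hdvd
      · rw [hW, h]; exact hdvd.neg_right
    have hle := (le_rootMultiplicity_iff hW0).2 hdvdW
    omega
  -- sum of multiplicities of W over R is at most its degree
  have hsumW : ∑ r ∈ R, rootMultiplicity r W ≤ W.natDegree := by
    have h2 : ∑ r ∈ R ∪ W.roots.toFinset, W.roots.count r = Multiset.card W.roots := by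
      rw [← Multiset.toFinset_sum_count_eq W.roots]
      exact (Finset.sum_subset Finset.subset_union_right
        (fun x _ hx => Multiset.count_eq_zero.2
          (fun hmem => hx (Multiset.mem_toFinset.2 hmem)))).symm
    calc ∑ r ∈ R, rootMultiplicity r W = ∑ r ∈ R, W.roots.count r :=
          Finset.sum_congr rfl fun r _ => (count_roots W).symm
      _ ≤ ∑ r ∈ R ∪ W.roots.toFinset, W.roots.count r :=
          Finset.sum_le_sum_of_subset Finset.subset_union_left
      _ = Multiset.card W.roots := h2
      _ ≤ W.natDegree := card_roots' W
  -- sum of multiplicities of each v t over R is exactly its degree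
  have hsumv : ∀ t, ∑ r ∈ R, rootMultiplicity r (v t) = (v t).natDegree := by
    intro t
    have hsub : (v t).roots.toFinset ⊆ R := by
      intro r hr
      rw [hR, Multiset.mem_toFinset]
      rw [Multiset.mem_toFinset] at hr
      exact Multiset.mem_of_le
        (roots.le_of_dvd hprod0 (Finset.dvd_prod_of_mem v (Finset.mem_univ t))) hr
    have hcard : Multiset.card (v t).roots = (v t).natDegree :=
      IsAlgClosed.card_roots_eq_natDegree
    calc ∑ r ∈ R, rootMultiplicity r (v t) = ∑ r ∈ R, (v t).roots.count r :=
          Finset.sum_congr rfl fun r _ => (count_roots _).symm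
      _ = Multiset.card (v t).roots := by
          rw [← Multiset.toFinset_sum_count_eq (v t).roots]
          exact (Finset.sum_subset hsub (fun x _ hx => Multiset.count_eq_zero.2
            (fun hmem => hx (Multiset.mem_toFinset.2 hmem)))).symm
      _ = (v t).natDegree := hcard
  have hdegW : W.natDegree ≤ ∑ s : Fin n, (v (t₀.succAbove s)).natDegree := natDegree_Wmat_det _
  -- main inequality
  have hmain : (v t₀).natDegree ≤ T * R.card := by
    have h1 : ∑ t, (v t).natDegree = ∑ r ∈ R, ∑ t, rootMultiplicity r (v t) := by
      rw [Finset.sum_comm]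
      exact Finset.sum_congr rfl fun t _ => (hsumv t).symm
    have h2 : ∑ r ∈ R, ∑ t, rootMultiplicity r (v t)
        ≤ ∑ r ∈ R, (rootMultiplicity r W + T) := Finset.sum_le_sum hkey
    have h3 : ∑ r ∈ R, (rootMultiplicity r W + T)
        = (∑ r ∈ R, rootMultiplicity r W) + T * R.card := by
      rw [Finset.sum_add_distrib, Finset.sum_const, smul_eq_mul, mul_comm]
    have h4 : ∑ t, (v t).natDegree
        = (v t₀).natDegree + ∑ s : Fin n, (v (t₀.succAbove s)).natDegree :=
      Fin.sum_univ_succAbove _ t₀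
    linarith
  -- bound on the number of distinct roots
  have hN : R.card ≤ (n+1) * d t₀ := by
    have hsubR : R ⊆ Finset.univ.biUnion (fun t => (v t).roots.toFinset) := by
      intro r hr
      rw [hR, Multiset.mem_toFinset, mem_roots hprod0, IsRoot, eval_prod] at hr
      obtain ⟨t, -, ht⟩ := Finset.prod_eq_zero_iff.1 hr
      exact Finset.mem_biUnion.2 ⟨t, Finset.mem_univ t,
        Multiset.mem_toFinset.2 ((mem_roots (hv0 t)).2 ht)⟩
    have hcards : ∀ t, ((v t).roots.toFinset).card ≤ d t₀ := by
      intro t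
      have hroots : (v t).roots = m • (u ↑(e t)).roots := by
        rw [hv, roots_C_mul _ (hce t), roots_pow]
      have htf : (v t).roots.toFinset = (u ↑(e t)).roots.toFinset := by
        ext x
        simp only [Multiset.mem_toFinset, hroots, Multiset.mem_nsmul]
        exact ⟨fun h => h.2, fun h => ⟨by omega, h⟩⟩
      rw [htf]
      calc ((u ↑(e t)).roots.toFinset).card ≤ Multiset.card (u ↑(e t)).roots :=
            Multiset.toFinset_card_le _
        _ ≤ (u ↑(e t)).natDegree := card_roots' _
        _ ≤ d t₀ := ht₀ t (Finset.mem_univ t)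
    calc R.card ≤ (Finset.univ.biUnion (fun t => (v t).roots.toFinset)).card :=
          Finset.card_le_card hsubR
      _ ≤ ∑ t, ((v t).roots.toFinset).card := Finset.card_biUnion_le
      _ ≤ ∑ _t : Fin (n+1), d t₀ := Finset.sum_le_sum fun t _ => hcards t
      _ = (n+1) * d t₀ := by rw [Finset.sum_const, smul_eq_mul, Finset.card_univ, Fintype.card_fin]
  by_cases hd0 : d t₀ = 0
  · -- all the u i, i ∈ S, are constants : two of them are proportional
    have hpos : 0 < n := Nat.pos_of_ne_zero hn0
    set s0 : Fin n := ⟨0, hpos⟩ with hs0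
    set t' : Fin (n+1) := t₀.succAbove s0 with ht'
    have htt' : t' ≠ t₀ := Fin.succAbove_ne t₀ s0
    have hd1 : d t₀ = 0 := hd0
    have hd2 : d t' = 0 := Nat.le_zero.1 (hd0 ▸ ht₀ t' (Finset.mem_univ t'))
    obtain ⟨α, hα⟩ : ∃ α : ℂ, u ↑(e t₀) = C α := ⟨_, eq_C_of_natDegree_eq_zero hd1⟩
    obtain ⟨β, hβ⟩ : ∃ β : ℂ, u ↑(e t') = C β := ⟨_, eq_C_of_natDegree_eq_zero hd2⟩
    have hβ0 : β ≠ 0 := fun h => hue t' (by rw [hβ, h, map_zero])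
    apply hpropu ↑(e t₀) (heS t₀) ↑(e t') (heS t') (fun h => htt' (heinj _ _ h.symm)) (α / β)
    rw [hα, hβ, ← C_mul, div_mul_cancel₀ _ hβ0]
  · -- the degree bound forces m to be small : contradiction
    have hdpos : 0 < d t₀ := Nat.pos_of_ne_zero hd0
    have hfin : m * d t₀ ≤ (T * (n+1)) * d t₀ := by
      calc m * d t₀ = (v t₀).natDegree := (hvdeg t₀).symm
        _ ≤ T * R.card := hmain
        _ ≤ T * ((n+1) * d t₀) := Nat.mul_le_mul_left _ hN
        _ = (T * (n+1)) * d t₀ := by ring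
    have hm2 : m ≤ T * (n+1) := Nat.le_of_mul_le_mul_right hfin hdpos
    have hTn : T ≤ n * n := by
      rw [hT]
      calc ∑ i : Fin n, (i : ℕ) ≤ ∑ _i : Fin n, n :=
            Finset.sum_le_sum fun i _ => le_of_lt i.isLt
        _ = n * n := by rw [Finset.sum_const, smul_eq_mul, Finset.card_univ, Fintype.card_fin]
    have hnk : n + 1 ≤ k := by
      have h1 : S.card ≤ k := le_trans (Finset.card_le_univ S) (Fintype.card_fin k).le
      omega
    have hk3 : m ≤ k ^ 3 := by
      have h1 : T * (n+1) ≤ (n*n) * (n+1) := Nat.mul_le_mul_right _ hTn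
      have h2 : (n*n) * (n+1) ≤ (k*k) * k :=
        Nat.mul_le_mul (Nat.mul_le_mul (by omega) (by omega)) hnk
      have h3 : k * k * k = k ^ 3 := by ring
      omega
    omega
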